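/- Let G be a Tanner graph with a rooted tree decomposition, and let t be a join node with children t1 and t2 (B_t = B_{t1} = B_{t2}). Suppose S_{t1} is a trapping set with extended parameters (I_{t1},Q,d_{t1}) in G_{t1} and S_{t2} is a trapping set with extended parameters (I_{t2},Q,d_{t2}) in G_{t2}. Then the sets Γ_o(G_{t1}[S_{t1}]) \ B_t^c and Γ_o(G_{t2}[S_{t2}]) \ B_t^c are disjoint, and S_{t1} ∪ S_{t2} is a trapping set with extended parameters (I_{t1} ⊕ I_{t2} ⊕ Γ_o(G_t[Q ∪ B_t^c]), Q, d_{t1} + d_{t2}) in G_t. -/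

import Mathlib

/-- A Tanner graph: a bipartite graph on vertex set `V` partitioned into
variable nodes `L` and check nodes `R`, every edge joining `L` and `R`. -/
structure TannerGraph (V : Type*) where
  G : SimpleGraph V
  L : Set V
  R : Set V
  disj : Disjoint L R
  cover : L ∪ R = Set.univ
  bipartite : ∀ ⦃u v⦄, G.Adj u v → (u ∈ L ∧ v ∈ R) ∨ (u ∈ R ∧ v ∈ L)

/-- `Γ_o(G[S])`: check nodes having an odd number of neighbours in `S`. -/
def TannerGraph.Gamma {V : Type*} (TG : TannerGraph V) (S : Set V) : Set V :=
  {c | c ∈ TG.R ∧ Odd ((TG.G.neighborSet c ∩ S).ncard)}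

/-- A rooted tree decomposition of the graph `G`: `T` is a finite tree with
root `root` and bags `B i ⊆ V` covering all vertices and edges, such that for
every vertex the set of bags containing it induces a connected subgraph of `T`. -/
structure IsRootedTreeDecomp {V ι : Type*} (G : SimpleGraph V)
    (T : SimpleGraph ι) (root : ι) (B : ι → Set V) : Prop where
  isTree : T.IsTree
  covers : ∀ v, ∃ i, v ∈ B i
  coversEdge : ∀ ⦃u v⦄, G.Adj u v → ∃ i, u ∈ B i ∧ v ∈ B i
  connBags : ∀ v, (T.induce {i | v ∈ B i}).Connected

/-- `Desc T root t i`: `i` is a descendant of `t` in the tree `T` rooted at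
`root`, i.e. `t` lies on a path from the root to `i` (`t` itself included). -/
def Desc {ι : Type*} (T : SimpleGraph ι) (root : ι) (t i : ι) : Prop :=
  ∃ p : T.Walk root i, p.IsPath ∧ t ∈ p.support

/-- `IsChildOf T root s t`: `s` is a child of `t` in the rooted tree. -/
def IsChildOf {ι : Type*} (T : SimpleGraph ι) (root : ι) (s t : ι) : Prop :=
  T.Adj t s ∧ Desc T root t s

/-- `∪_{i ∈ T_t} B_i`: union of the bags over all descendants of `t`;
this is the vertex set of the induced subgraph `G_t`. -/
def subVerts {V ι : Type*} (T : SimpleGraph ι) (root : ι) (B : ι → Set V)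
    (t : ι) : Set V :=
  {v | ∃ i, Desc T root t i ∧ v ∈ B i}

/-- `Γ_o(G_t[S])`, where `W` is the vertex set of `G_t`: check nodes of `G_t`
having an odd number of `G_t`-neighbours in `S`. -/
def GammaLoc {V : Type*} (TG : TannerGraph V) (W S : Set V) : Set V :=
  {c | c ∈ TG.R ∧ c ∈ W ∧ Odd ((TG.G.neighborSet c ∩ W ∩ S).ncard)}

/-- `S` is a trapping set with parameters `(R', Q)` in `G_t`, where `W` is the
vertex set of `G_t` and `Bt` is the bag at `t`. -/
def HasParams {V : Type*} (TG : TannerGraph V) (W Bt S R' Q : Set V) : Prop :=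
  S.Nonempty ∧ S ⊆ W ∩ TG.L ∧ S ∩ (Bt ∩ TG.L) = Q ∧ GammaLoc TG W S = R'

/-- `S` is a trapping set with extended parameters `(I, Q, d)` in `G_t`. -/
def HasExtParams {V : Type*} (TG : TannerGraph V) (W Bt S I Q : Set V)
    (d : ℕ) : Prop :=
  S.Nonempty ∧ S ⊆ W ∩ TG.L ∧ S ∩ (Bt ∩ TG.L) = Q ∧
    GammaLoc TG W S ∩ (Bt ∩ TG.R) = I ∧ (GammaLoc TG W S \ (Bt ∩ TG.R)).ncard = d

/-- `Γ_o(G_t[Q ∪ B_t^c]) = {c ∈ B_t^c : |N_{G_t}(c) ∩ Q| is odd}`. -/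
def GammaBag {V : Type*} (TG : TannerGraph V) (W Bt Q : Set V) : Set V :=
  {c | c ∈ Bt ∩ TG.R ∧ Odd ((TG.G.neighborSet c ∩ W ∩ Q).ncard)}

open SimpleGraph

section TreeLemmas
variable {ι : Type*} [DecidableEq ι] {T : SimpleGraph ι} {root : ι}

lemma desc_mem_support (hT : T.IsTree) {t i : ι} (h : Desc T root t i)
    {p : T.Walk root i} (hp : p.IsPath) : t ∈ p.support := by
  obtain ⟨q, hq, ht⟩ := h
  exact ((hT.existsUnique_path root i).unique hp hq).symm ▸ ht

lemma desc_self (hT : T.IsTree) (t : ι) : Desc T root t t := by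
  obtain ⟨p, hp⟩ := (hT.existsUnique_path root t).exists
  exact ⟨p, hp, p.end_mem_support⟩

lemma desc_step (hT : T.IsTree) {t i s : ι} (hd : Desc T root t i)
    (hadj : T.Adj i s) (hti : t ≠ i) (hts : t ≠ s) : Desc T root t s := by
  obtain ⟨p, hp, ht⟩ := hd
  by_cases hs : s ∈ p.support
  · refine ⟨p.takeUntil s hs, hp.takeUntil hs, ?_⟩
    by_contra htq
    have htd : t ∈ (p.dropUntil s hs).support := by
      rw [← p.take_spec hs, Walk.mem_support_append_iff] at ht
      tauto
    have hdrop : (p.dropUntil s hs).IsPath := hp.dropUntil hs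
    have hedge : (Walk.cons hadj.symm Walk.nil : T.Walk s i).IsPath := by
      simp [Walk.isPath_def, hadj.ne']
    have heq := (hT.existsUnique_path s i).unique hdrop hedge
    rw [heq] at htd
    simp only [Walk.support_cons, Walk.support_nil, List.mem_cons,
      List.mem_singleton, List.not_mem_nil] at htd
    rcases htd with h | h | h
    · exact hts h
    · exact hti h
    · exact h
  · refine ⟨p.concat hadj, ?_, ?_⟩
    · rw [Walk.isPath_def, Walk.support_concat,
        List.nodup_append]
      exact ⟨hp.support_nodup, List.nodup_singleton _,
        fun a ha b hb h => hs (by simp at hb; rw [← hb, ← h]; exact ha)⟩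
    · rw [Walk.support_concat, List.mem_append]
      exact Or.inl ht

lemma desc_of_walk (hT : T.IsTree) {t j : ι} :
    ∀ {i : ι} (w : T.Walk i j), Desc T root t i → t ∉ w.support → Desc T root t j := by
  intro i w
  induction w with
  | nil => exact fun hd _ => hd
  | @cons a b c h q ih =>
    intro hd htw
    rw [Walk.support_cons, List.mem_cons] at htw
    push_neg at htw
    have htb : t ≠ b := fun he => htw.2 (he ▸ q.start_mem_support)
    exact ih (desc_step hT hd h htw.1 htb) htw.2

lemma desc_of_child (hT : T.IsTree) {t s i : ι} (hc : IsChildOf T root s t)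
    (hd : Desc T root s i) : Desc T root t i := by
  obtain ⟨p, hp, hsp⟩ := hd
  have ht : t ∈ (p.takeUntil s hsp).support :=
    desc_mem_support hT hc.2 (hp.takeUntil hsp)
  exact ⟨p, hp, p.support_takeUntil_subset hsp ht⟩

lemma exists_path_avoiding (hT : T.IsTree) {t s j : ι}
    (hc : IsChildOf T root s t) (hd : Desc T root s j) :
    ∃ r : T.Walk s j, r.IsPath ∧ t ∉ r.support := by
  obtain ⟨p, hp, hsp⟩ := hd
  refine ⟨p.dropUntil s hsp, hp.dropUntil hsp, ?_⟩
  have hts : t ≠ s := hc.1.ne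
  have ht : t ∈ (p.takeUntil s hsp).support :=
    desc_mem_support hT hc.2 (hp.takeUntil hsp)
  intro htd
  have hnodup : p.support.Nodup := hp.support_nodup
  rw [← p.take_spec hsp, Walk.support_append, List.nodup_append] at hnodup
  have htail : t ∈ ((p.dropUntil s hsp).support).tail := by
    rw [(p.dropUntil s hsp).support_eq_cons, List.mem_cons] at htd
    tauto
  exact hnodup.2.2 t ht t htail rfl

lemma not_desc_both (hT : T.IsTree) {t t1 t2 j : ι}
    (hc1 : IsChildOf T root t1 t) (hc2 : IsChildOf T root t2 t) (hne : t1 ≠ t2)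
    (hd1 : Desc T root t1 j) (hd2 : Desc T root t2 j) : False := by
  obtain ⟨r1, hr1, ht1⟩ := exists_path_avoiding hT hc1 hd1
  obtain ⟨r2, hr2, ht2⟩ := exists_path_avoiding hT hc2 hd2
  have htw : t ∉ (r1.append r2.reverse).support := by
    rw [Walk.mem_support_append_iff]
    push_neg
    exact ⟨ht1, by rwa [Walk.support_reverse, List.mem_reverse]⟩
  have htP : t ∉ ((r1.append r2.reverse).toPath : T.Walk t1 t2).support :=
    fun h => htw ((r1.append r2.reverse).support_toPath_subset h)
  have hedge : (Walk.cons hc1.1.symm (Walk.cons hc2.1 Walk.nil) : T.Walk t1 t2).IsPath := by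
    simp [Walk.isPath_def, hc1.1.ne', hc2.1.ne, hne]
  have heq := (hT.existsUnique_path t1 t2).unique
    ((r1.append r2.reverse).toPath.2) hedge
  apply htP
  rw [heq]
  simp

lemma desc_cases (hT : T.IsTree) {t i : ι} (hd : Desc T root t i) (hne : i ≠ t) :
    ∃ s, IsChildOf T root s t ∧ Desc T root s i := by
  obtain ⟨p, hp, ht⟩ := hd
  have hnn : ¬ (p.dropUntil t ht).Nil := Walk.not_nil_of_ne (Ne.symm hne)
  obtain ⟨s, hadj, r', hre⟩ := Walk.not_nil_iff.mp hnn
  have hstail : s ∈ ((p.dropUntil t ht).support).tail := by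
    rw [hre]
    simp
  have hnodup : p.support.Nodup := hp.support_nodup
  rw [← p.take_spec ht, Walk.support_append, List.nodup_append] at hnodup
  have hsq : s ∉ (p.takeUntil t ht).support := fun hx => hnodup.2.2 s hx s hstail rfl
  have hconc : ((p.takeUntil t ht).concat hadj).IsPath := by
    rw [Walk.isPath_def, Walk.support_concat, List.nodup_append]
    exact ⟨(hp.takeUntil ht).support_nodup, List.nodup_singleton _,
      fun a ha b hb h => hsq (by simp at hb; rw [← hb, ← h]; exact ha)⟩
  refine ⟨s, ⟨hadj, ⟨(p.takeUntil t ht).concat hadj, hconc, ?_⟩⟩, ⟨p, hp, ?_⟩⟩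
  · rw [Walk.support_concat, List.mem_append]
    exact Or.inl ((p.takeUntil t ht).end_mem_support)
  · exact p.support_dropUntil_subset ht (List.mem_of_mem_tail hstail)

end TreeLemmas

open SimpleGraph in
private lemma exists_walk_in_set {ι : Type*} {T : SimpleGraph ι} {S : Set ι}
    (hconn : (T.induce S).Connected) {i j : ι} (hi : i ∈ S) (hj : j ∈ S) :
    ∃ w : T.Walk i j, ∀ x ∈ w.support, x ∈ S := by
  obtain ⟨w0⟩ := hconn.preconnected ⟨i, hi⟩ ⟨j, hj⟩
  refine ⟨w0.map (SimpleGraph.Embedding.induce S).toHom, ?_⟩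
  intro x hx
  have hx2 : x ∈ (w0.map (SimpleGraph.Embedding.induce S).toHom).support := hx
  rw [Walk.support_map, List.mem_map] at hx2
  obtain ⟨⟨y, hy⟩, _, rfl⟩ := hx2
  exact hy

private lemma odd_of_add_eq {u q a b : ℕ} (h : u + q = a + b) :
    (Odd u ↔ ((Odd a ↔ ¬ Odd b) ↔ ¬ Odd q)) := by
  simp only [Nat.odd_iff]
  omega


/-- join-node combination rule for extended parameters, together
with the disjointness of the parts of the odd-degree sets outside `B_t^c`. -/
theorem stmt_8 {V ι : Type*} [Fintype V] [Fintype ι]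
    (TG : TannerGraph V) (T : SimpleGraph ι) (root : ι) (B : ι → Set V)
    (hD : IsRootedTreeDecomp TG.G T root B)
    (t t1 t2 : ι)
    (hc1 : IsChildOf T root t1 t) (hc2 : IsChildOf T root t2 t) (hne : t1 ≠ t2)
    (honly : ∀ s, IsChildOf T root s t → s = t1 ∨ s = t2)
    (hB1 : B t = B t1) (hB2 : B t = B t2)
    (S1 S2 I1 I2 Q : Set V) (d1 d2 : ℕ)
    (h1 : HasExtParams TG (subVerts T root B t1) (B t1) S1 I1 Q d1)
    (h2 : HasExtParams TG (subVerts T root B t2) (B t2) S2 I2 Q d2) :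
    Disjoint (GammaLoc TG (subVerts T root B t1) S1 \ (B t ∩ TG.R))
      (GammaLoc TG (subVerts T root B t2) S2 \ (B t ∩ TG.R)) ∧
    HasExtParams TG (subVerts T root B t) (B t) (S1 ∪ S2)
      (symmDiff (symmDiff I1 I2) (GammaBag TG (subVerts T root B t) (B t) Q))
      Q (d1 + d2) := by
  classical
  obtain ⟨hS1ne, hS1sub, hQ1, hI1, hcd1⟩ := h1
  obtain ⟨hS2ne, hS2sub, hQ2, hI2, hcd2⟩ := h2
  rw [← hB1] at hQ1 hI1 hcd1
  rw [← hB2] at hQ2 hI2 hcd2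
  have hT := hD.isTree
  set W1 := subVerts T root B t1 with hW1def
  set W2 := subVerts T root B t2 with hW2def
  set W := subVerts T root B t with hWdef
  have hW1W : W1 ⊆ W := by
    rintro v ⟨k, hk, hvk⟩; exact ⟨k, desc_of_child hT hc1 hk, hvk⟩
  have hW2W : W2 ⊆ W := by
    rintro v ⟨k, hk, hvk⟩; exact ⟨k, desc_of_child hT hc2 hk, hvk⟩
  have hBtW1 : B t ⊆ W1 := fun v hv => ⟨t1, desc_self hT t1, hB1 ▸ hv⟩
  have hBtW2 : B t ⊆ W2 := fun v hv => ⟨t2, desc_self hT t2, hB2 ▸ hv⟩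
  have hS1W1 : S1 ⊆ W1 := fun v hv => (hS1sub hv).1
  have hS2W2 : S2 ⊆ W2 := fun v hv => (hS2sub hv).1
  have hSW : S1 ∪ S2 ⊆ W :=
    Set.union_subset (fun v hv => hW1W (hS1W1 hv)) (fun v hv => hW2W (hS2W2 hv))
  have hWsub : W ⊆ W1 ∪ W2 := by
    rintro v ⟨k, hk, hvk⟩
    by_cases hkt : k = t
    · exact Or.inl (hBtW1 (hkt ▸ hvk))
    · obtain ⟨s, hs, hdsk⟩ := desc_cases hT hk hkt
      rcases honly s hs with rfl | rfl
      · exact Or.inl ⟨k, hdsk, hvk⟩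
      · exact Or.inr ⟨k, hdsk, hvk⟩
  have hsep : ∀ v, v ∈ W1 → v ∈ W2 → v ∈ B t := by
    rintro v ⟨i, hdi, hvi⟩ ⟨j, hdj, hvj⟩
    obtain ⟨w, hw⟩ := exists_walk_in_set (hD.connBags v) hvi hvj
    by_cases h1m : t1 ∈ w.support
    · rw [hB1]; exact hw t1 h1m
    · exact absurd (desc_of_walk hT w hdi h1m)
        (fun hx => not_desc_both hT hc1 hc2 hne hx hdj)
  have hnbr1 : ∀ c, c ∈ W1 → c ∉ B t → ∀ v, TG.G.Adj c v → v ∈ W1 := by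
    rintro c ⟨m, hdm, hcm⟩ hcB v hadj
    obtain ⟨k, hck, hvk⟩ := hD.coversEdge hadj
    obtain ⟨w, hw⟩ := exists_walk_in_set (hD.connBags c) hcm hck
    by_cases h1m : t1 ∈ w.support
    · exact absurd (by rw [hB1]; exact hw t1 h1m) hcB
    · exact ⟨k, desc_of_walk hT w hdm h1m, hvk⟩
  have hnbr2 : ∀ c, c ∈ W2 → c ∉ B t → ∀ v, TG.G.Adj c v → v ∈ W2 := by
    rintro c ⟨m, hdm, hcm⟩ hcB v hadj
    obtain ⟨k, hck, hvk⟩ := hD.coversEdge hadj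
    obtain ⟨w, hw⟩ := exists_walk_in_set (hD.connBags c) hcm hck
    by_cases h2m : t2 ∈ w.support
    · exact absurd (by rw [hB2]; exact hw t2 h2m) hcB
    · exact ⟨k, desc_of_walk hT w hdm h2m, hvk⟩
  have hQS1 : Q ⊆ S1 := by rw [← hQ1]; exact Set.inter_subset_left
  have hQS2 : Q ⊆ S2 := by rw [← hQ2]; exact Set.inter_subset_left
  have hS12 : S1 ∩ S2 = Q := by
    apply Set.Subset.antisymm
    · rintro v ⟨hv1, hv2⟩
      rw [← hQ1]
      exact ⟨hv1, hsep v (hS1W1 hv1) (hS2W2 hv2), (hS1sub hv1).2⟩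
    · exact fun v hv => ⟨hQS1 hv, hQS2 hv⟩
  have hQW : Q ⊆ W := by
    intro v hv
    rw [← hQ1] at hv
    exact hW1W (hBtW1 hv.2.1)
  have hNW1 : ∀ c, TG.G.neighborSet c ∩ W1 ∩ S1 = TG.G.neighborSet c ∩ S1 := fun c => by
    rw [Set.inter_assoc, Set.inter_eq_right.mpr hS1W1]
  have hNW2 : ∀ c, TG.G.neighborSet c ∩ W2 ∩ S2 = TG.G.neighborSet c ∩ S2 := fun c => by
    rw [Set.inter_assoc, Set.inter_eq_right.mpr hS2W2]
  have hNW : ∀ c, TG.G.neighborSet c ∩ W ∩ (S1 ∪ S2)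
      = TG.G.neighborSet c ∩ (S1 ∪ S2) := fun c => by
    rw [Set.inter_assoc, Set.inter_eq_right.mpr hSW]
  have hNQ : ∀ c, TG.G.neighborSet c ∩ W ∩ Q = TG.G.neighborSet c ∩ Q := fun c => by
    rw [Set.inter_assoc, Set.inter_eq_right.mpr hQW]
  have hkey : ∀ c, (TG.G.neighborSet c ∩ (S1 ∪ S2)).ncard + (TG.G.neighborSet c ∩ Q).ncard
      = (TG.G.neighborSet c ∩ S1).ncard + (TG.G.neighborSet c ∩ S2).ncard := fun c => by
    have h := Set.ncard_union_add_ncard_inter (TG.G.neighborSet c ∩ S1)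
      (TG.G.neighborSet c ∩ S2) (Set.toFinite _) (Set.toFinite _)
    rwa [← Set.inter_union_distrib_left, ← Set.inter_inter_distrib_left, hS12] at h
  have hloc1 : ∀ c, c ∈ W1 → c ∉ B t →
      TG.G.neighborSet c ∩ (S1 ∪ S2) = TG.G.neighborSet c ∩ S1 := by
    intro c hcW1 hcB
    rw [Set.inter_union_distrib_left]
    refine Set.union_eq_self_of_subset_right ?_
    rintro v ⟨hvN, hvS2⟩
    have hvB : v ∈ B t := hsep v (hnbr1 c hcW1 hcB v hvN) (hS2W2 hvS2)
    refine ⟨hvN, hQS1 ?_⟩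
    rw [← hQ2]
    exact ⟨hvS2, hvB, (hS2sub hvS2).2⟩
  have hloc2 : ∀ c, c ∈ W2 → c ∉ B t →
      TG.G.neighborSet c ∩ (S1 ∪ S2) = TG.G.neighborSet c ∩ S2 := by
    intro c hcW2 hcB
    rw [Set.inter_union_distrib_left]
    refine Set.union_eq_self_of_subset_left ?_
    rintro v ⟨hvN, hvS1⟩
    have hvB : v ∈ B t := hsep v (hS1W1 hvS1) (hnbr2 c hcW2 hcB v hvN)
    refine ⟨hvN, hQS2 ?_⟩
    rw [← hQ1]
    exact ⟨hvS1, hvB, (hS1sub hvS1).2⟩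
  have hout : GammaLoc TG W (S1 ∪ S2) \ (B t ∩ TG.R)
      = (GammaLoc TG W1 S1 \ (B t ∩ TG.R)) ∪ (GammaLoc TG W2 S2 \ (B t ∩ TG.R)) := by
    ext c
    simp only [Set.mem_diff, Set.mem_union, GammaLoc, Set.mem_setOf_eq, hNW1, hNW2, hNW]
    constructor
    · rintro ⟨⟨hR, hcW, hodd⟩, hnB⟩
      have hcnotB : c ∉ B t := fun h => hnB ⟨h, hR⟩
      rcases hWsub hcW with h1 | h2
      · exact Or.inl ⟨⟨hR, h1, by rwa [hloc1 c h1 hcnotB] at hodd⟩, hnB⟩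
      · exact Or.inr ⟨⟨hR, h2, by rwa [hloc2 c h2 hcnotB] at hodd⟩, hnB⟩
    · rintro (⟨⟨hR, h1, hodd⟩, hnB⟩ | ⟨⟨hR, h2, hodd⟩, hnB⟩)
      · have hcnotB : c ∉ B t := fun h => hnB ⟨h, hR⟩
        exact ⟨⟨hR, hW1W h1, by rwa [hloc1 c h1 hcnotB]⟩, hnB⟩
      · have hcnotB : c ∉ B t := fun h => hnB ⟨h, hR⟩
        exact ⟨⟨hR, hW2W h2, by rwa [hloc2 c h2 hcnotB]⟩, hnB⟩
  have hdisj : Disjoint (GammaLoc TG W1 S1 \ (B t ∩ TG.R))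
      (GammaLoc TG W2 S2 \ (B t ∩ TG.R)) := by
    rw [Set.disjoint_left]
    rintro c ⟨hg1, hnB⟩ ⟨hg2, _⟩
    exact hnB ⟨hsep c hg1.2.1 hg2.2.1, hg1.1⟩
  have hGBsub : GammaBag TG W (B t) Q ⊆ B t ∩ TG.R := fun c hc => hc.1
  have hI1sub : I1 ⊆ B t ∩ TG.R := by rw [← hI1]; exact Set.inter_subset_right
  have hI2sub : I2 ⊆ B t ∩ TG.R := by rw [← hI2]; exact Set.inter_subset_right
  have hin : GammaLoc TG W (S1 ∪ S2) ∩ (B t ∩ TG.R)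
      = symmDiff (symmDiff I1 I2) (GammaBag TG W (B t) Q) := by
    ext c
    by_cases hcB : c ∈ B t ∩ TG.R
    · have hcW1 : c ∈ W1 := hBtW1 hcB.1
      have hcW2 : c ∈ W2 := hBtW2 hcB.1
      have hcW : c ∈ W := hW1W hcW1
      have hcBt : c ∈ B t := hcB.1
      have hcR : c ∈ TG.R := hcB.2
      have hu : (c ∈ GammaLoc TG W (S1 ∪ S2) ∩ (B t ∩ TG.R)) ↔
          Odd ((TG.G.neighborSet c ∩ (S1 ∪ S2)).ncard) := by
        simp only [Set.mem_inter_iff, GammaLoc, Set.mem_setOf_eq, hNW]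
        exact ⟨fun h => h.1.2.2, fun h => ⟨⟨hcR, hcW, h⟩, hcBt, hcR⟩⟩
      have ha' : c ∈ I1 ↔ Odd ((TG.G.neighborSet c ∩ S1).ncard) := by
        rw [← hI1]
        simp only [Set.mem_inter_iff, GammaLoc, Set.mem_setOf_eq, hNW1]
        exact ⟨fun h => h.1.2.2, fun h => ⟨⟨hcR, hcW1, h⟩, hcBt, hcR⟩⟩
      have hb' : c ∈ I2 ↔ Odd ((TG.G.neighborSet c ∩ S2).ncard) := by
        rw [← hI2]
        simp only [Set.mem_inter_iff, GammaLoc, Set.mem_setOf_eq, hNW2]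
        exact ⟨fun h => h.1.2.2, fun h => ⟨⟨hcR, hcW2, h⟩, hcBt, hcR⟩⟩
      have hg' : c ∈ GammaBag TG W (B t) Q ↔ Odd ((TG.G.neighborSet c ∩ Q).ncard) := by
        simp only [GammaBag, Set.mem_setOf_eq, Set.mem_inter_iff, hNQ]
        exact ⟨fun h => h.2, fun h => ⟨⟨hcBt, hcR⟩, h⟩⟩
      have hk := hkey c
      rw [Set.mem_symmDiff, Set.mem_symmDiff, hu, ha', hb', hg']
      simp only [Nat.odd_iff] at hk ⊢
      omega
    · constructor
      · rintro ⟨-, hB⟩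
        exact absurd hB hcB
      · intro h
        rcases Set.symmDiff_subset_union h with h' | h'
        · rcases Set.symmDiff_subset_union h' with h'' | h''
          · exact absurd (hI1sub h'') hcB
          · exact absurd (hI2sub h'') hcB
        · exact absurd (hGBsub h') hcB
  refine ⟨hdisj, hS1ne.mono Set.subset_union_left,
    Set.union_subset (fun v hv => ⟨hW1W (hS1sub hv).1, (hS1sub hv).2⟩)
      (fun v hv => ⟨hW2W (hS2sub hv).1, (hS2sub hv).2⟩), ?_, hin, ?_⟩
  · rw [Set.union_inter_distrib_right, hQ1, hQ2, Set.union_self]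
  · rw [hout, Set.ncard_union_eq hdisj (Set.toFinite _) (Set.toFinite _), hcd1, hcd2]
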